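/- Fix an integer r ≥ 1 and an integer ν with 0 ≤ ν ≤ 2r−2. Then ∫_Ω Θ_n(t)^{2r} dt ≍ n^{6r−2} (two-sided bounds with constants depending only on r), and there exists a constant c > 0 depending only on r and ν such that for all n ≥ 1, ∫_Ω ‖t‖^ν·K_{n,r}(t) dt ≤ c·n^{−ν}, where K_{n,r}(t) := Θ_n(t)^{2r} / ∫_Ω Θ_n(s)^{2r} ds is the normalized Jackson-type kernel. -/

import Mathlib

noncomputable section

open MeasureTheory Filter

/-- The (half-open) regular hexagon `Ω` in the coordinates `(t₁,t₂)` (with `t₃ = -(t₁+t₂)`). -/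
def Hex : Set (ℝ × ℝ) :=
  {t | -1 ≤ t.1 ∧ t.1 < 1 ∧ -1 ≤ t.2 ∧ t.2 < 1 ∧ -1 ≤ t.1 + t.2 ∧ t.1 + t.2 < 1}

/-- Third homogeneous coordinate: `t₃ = -(t₁+t₂)`. -/
def t3 (t : ℝ × ℝ) : ℝ := -(t.1 + t.2)

/-- The function `Θ_n`. -/
def Theta (n : ℕ) (t : ℝ × ℝ) : ℝ :=
  (Real.sin ((n+1) * Real.pi * (t.1 - t.2) / 3) *
   Real.sin ((n+1) * Real.pi * (t.2 - t3 t) / 3) *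
   Real.sin ((n+1) * Real.pi * (t3 t - t.1) / 3)) /
  (Real.sin (Real.pi * (t.1 - t.2) / 3) *
   Real.sin (Real.pi * (t.2 - t3 t) / 3) *
   Real.sin (Real.pi * (t3 t - t.1) / 3))

/-- The normalized Jackson-type kernel `K_{n,r} = Θ_n^{2r} / ∫_Ω Θ_n^{2r}`. -/
def JacksonKer (n r : ℕ) (t : ℝ × ℝ) : ℝ :=
  Theta n t ^ (2 * r) / ∫ s in Hex, Theta n s ^ (2 * r)

namespace Stmt12Aux

open Real Set

/-! ### Elementary sine bounds -/

lemma sin_ge_third (x : ℝ) (h0 : 0 ≤ x) (h : x ≤ 2*π/3) : x/3 ≤ Real.sin x := by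
  rcases le_or_gt x (π/2) with h1 | h1
  · have h2 := Real.mul_le_sin h0 h1
    have h3 : x/3 ≤ 2/π*x := by
      have hπ := Real.pi_pos
      rw [show 2/π*x = 2*x/π by ring, div_le_div_iff₀ (by norm_num) hπ]
      nlinarith [Real.pi_lt_d2]
    linarith
  · have h2 : Real.sin x = Real.cos (x - π/2) := by
      rw [← Real.cos_pi_div_two_sub, show π/2 - x = -(x - π/2) by ring, Real.cos_neg]
    have h4 : Real.cos (π/6) ≤ Real.cos (x - π/2) := by
      apply Real.cos_le_cos_of_nonneg_of_le_pi (by linarith) (by nlinarith [Real.pi_gt_three])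
      nlinarith [Real.pi_gt_three]
    rw [Real.cos_pi_div_six] at h4
    have h5 : (1.7:ℝ) ≤ Real.sqrt 3 := by
      nlinarith [Real.sq_sqrt (by norm_num : (0:ℝ) ≤ 3), Real.sqrt_nonneg 3]
    rw [h2]
    nlinarith [Real.pi_lt_d2]

lemma abs_sin_nat_mul_le (k : ℕ) (x : ℝ) : |Real.sin (k * x)| ≤ k * |Real.sin x| := by
  induction k with
  | zero => simp
  | succ k ih =>
    have h : ((k+1 : ℕ) : ℝ) * x = k*x + x := by push_cast; ring
    rw [h, Real.sin_add]
    calc |Real.sin (k*x) * Real.cos x + Real.cos (k*x) * Real.sin x|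
        ≤ |Real.sin (k*x) * Real.cos x| + |Real.cos (k*x) * Real.sin x| := abs_add_le _ _
      _ ≤ |Real.sin (k*x)| * 1 + 1 * |Real.sin x| := by
          rw [abs_mul, abs_mul]
          gcongr
          · exact Real.abs_cos_le_one _
          · exact Real.abs_cos_le_one _
      _ ≤ k * |Real.sin x| + 1 * |Real.sin x| := by rw [mul_one]; gcongr
      _ = ((k+1 : ℕ) : ℝ) * |Real.sin x| := by push_cast; ring

/-! ### Basic properties of `Hex` and `Theta` -/

lemma hex_measurable : MeasurableSet Hex := by
  unfold Hex
  apply MeasurableSet.inter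
  · exact measurableSet_le measurable_const measurable_fst
  apply MeasurableSet.inter
  · exact measurableSet_lt measurable_fst measurable_const
  apply MeasurableSet.inter
  · exact measurableSet_le measurable_const measurable_snd
  apply MeasurableSet.inter
  · exact measurableSet_lt measurable_snd measurable_const
  apply MeasurableSet.inter
  · exact measurableSet_le measurable_const (measurable_fst.add measurable_snd)
  · exact measurableSet_lt (measurable_fst.add measurable_snd) measurable_const

lemma theta_measurable (n : ℕ) : Measurable (Theta n) := by
  unfold Theta t3; fun_prop

lemma hex_d1 {t : ℝ × ℝ} (ht : t ∈ Hex) : |t.1 - t.2| ≤ 2 := by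
  obtain ⟨h1, h2, h3, h4, h5, h6⟩ := ht
  rw [abs_le]; constructor <;> linarith

lemma hex_d2 {t : ℝ × ℝ} (ht : t ∈ Hex) : |t.1 + 2*t.2| ≤ 2 := by
  obtain ⟨h1, h2, h3, h4, h5, h6⟩ := ht
  rw [abs_le]; constructor <;> linarith

lemma hex_d3 {t : ℝ × ℝ} (ht : t ∈ Hex) : |2*t.1 + t.2| ≤ 2 := by
  obtain ⟨h1, h2, h3, h4, h5, h6⟩ := ht
  rw [abs_le]; constructor <;> linarith

/-! ### Pointwise upper bound for `Theta` -/

lemma ratio_le (k : ℕ) (d : ℝ) (hd : |d| ≤ 2) :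
    |Real.sin (k * (π * d / 3)) / Real.sin (π * d / 3)| ≤ min (k:ℝ) (3/|d|) := by
  rcases eq_or_ne d 0 with rfl | hd0
  · simp
  · set u := π * d / 3 with hu
    have habsu : |u| = π * |d| / 3 := by
      rw [hu, abs_div, abs_mul, abs_of_pos Real.pi_pos]
      norm_num
    have hd_pos : 0 < |d| := abs_pos.mpr hd0
    have hu_pos : 0 < |u| := by
      rw [habsu]; positivity
    have hu_le : |u| ≤ 2*π/3 := by
      rw [habsu]; nlinarith [Real.pi_pos]
    have hu_lt_pi : |u| < π := by
      nlinarith [Real.pi_pos]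
    have hlow : |u|/3 ≤ Real.sin |u| := sin_ge_third _ (abs_nonneg u) hu_le
    have habs_sin : Real.sin |u| = |Real.sin u| := by
      rcases le_total 0 u with h | h
      · rw [abs_of_nonneg h, abs_of_nonneg
          (Real.sin_nonneg_of_nonneg_of_le_pi h (by linarith [le_abs_self u]))]
      · rw [abs_of_nonpos h, Real.sin_neg, abs_of_nonpos
          (Real.sin_nonpos_of_nonpos_of_neg_pi_le h (by linarith [neg_abs_le u]))]
    have hsin_pos : 0 < |Real.sin u| := by
      rw [← habs_sin]; linarith [hu_pos]
    rw [abs_div]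
    refine le_min ?_ ?_
    · rw [div_le_iff₀ hsin_pos]
      exact abs_sin_nat_mul_le k u
    · rw [div_le_div_iff₀ hsin_pos hd_pos]
      have h1 : |Real.sin (k * u)| ≤ 1 := abs_le.mpr ⟨Real.neg_one_le_sin _, Real.sin_le_one _⟩
      have h2 : π * |d| / 9 ≤ |Real.sin u| := by
        rw [← habs_sin]; rw [habsu] at hlow ⊢; linarith
      nlinarith [Real.pi_gt_three, hd_pos]

lemma theta_abs_le (n : ℕ) (t : ℝ × ℝ) (h1 : |t.1 - t.2| ≤ 2) (h2 : |t.1 + 2*t.2| ≤ 2)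
    (h3 : |2*t.1 + t.2| ≤ 2) :
    |Theta n t| ≤ ((n:ℝ)+1) * min ((n:ℝ)+1) (3/|t.1 - t.2|) * min ((n:ℝ)+1) (3/|t.1 + 2*t.2|) := by
  have e1 : t.2 - t3 t = t.1 + 2*t.2 := by unfold t3; ring
  have e2 : t3 t - t.1 = -(2*t.1 + t.2) := by unfold t3; ring
  have key : Theta n t =
      (Real.sin (((n+1:ℕ):ℝ) * (π * (t.1 - t.2) / 3)) / Real.sin (π * (t.1 - t.2) / 3)) *
      (Real.sin (((n+1:ℕ):ℝ) * (π * (t.1 + 2*t.2) / 3)) / Real.sin (π * (t.1 + 2*t.2) / 3)) *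
      (Real.sin (((n+1:ℕ):ℝ) * (π * (-(2*t.1 + t.2)) / 3)) / Real.sin (π * (-(2*t.1 + t.2)) / 3)) := by
    unfold Theta
    rw [e1, e2]
    rw [div_mul_div_comm, div_mul_div_comm]
    push_cast
    ring_nf
  have hr1 := ratio_le (n+1) (t.1 - t.2) h1
  have hr2 := ratio_le (n+1) (t.1 + 2*t.2) h2
  have hr3 : |Real.sin (((n+1:ℕ):ℝ) * (π * (-(2*t.1 + t.2)) / 3)) /
      Real.sin (π * (-(2*t.1 + t.2)) / 3)| ≤ ((n:ℝ)+1) := by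
    have := ratio_le (n+1) (-(2*t.1 + t.2)) (by rwa [abs_neg])
    have h := le_trans this (min_le_left _ _)
    push_cast at h ⊢
    exact h
  push_cast at hr1 hr2 key hr3
  rw [key, abs_mul, abs_mul]
  have g1 : (0:ℝ) ≤ min ((n:ℝ)+1) (3/|t.1 - t.2|) := le_min (by positivity) (by positivity)
  have g2 : (0:ℝ) ≤ min ((n:ℝ)+1) (3/|t.1 + 2*t.2|) := le_min (by positivity) (by positivity)
  calc |Real.sin (((n:ℝ)+1) * (π * (t.1 - t.2) / 3)) / Real.sin (π * (t.1 - t.2) / 3)| *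
        |Real.sin (((n:ℝ)+1) * (π * (t.1 + 2*t.2) / 3)) / Real.sin (π * (t.1 + 2*t.2) / 3)| *
        |Real.sin (((n:ℝ)+1) * (π * (-(2*t.1 + t.2)) / 3)) / Real.sin (π * (-(2*t.1 + t.2)) / 3)|
      ≤ (min ((n:ℝ)+1) (3/|t.1 - t.2|)) * (min ((n:ℝ)+1) (3/|t.1 + 2*t.2|)) * ((n:ℝ)+1) := by
        refine mul_le_mul (mul_le_mul hr1 hr2 (abs_nonneg _) g1) hr3 (abs_nonneg _) (by positivity)
    _ = ((n:ℝ)+1) * min ((n:ℝ)+1) (3/|t.1 - t.2|) * min ((n:ℝ)+1) (3/|t.1 + 2*t.2|) := by ring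

/-! ### The 1D weight function and its integral -/

noncomputable def phi (N : ℝ) (μ R : ℕ) (x : ℝ) : ℝ := |x|^μ * (min N (3/|x|))^R

lemma phi_meas (N : ℝ) (μ R : ℕ) : Measurable (phi N μ R) := by
  unfold phi; fun_prop

lemma phi_nonneg (N : ℝ) (hN : 0 ≤ N) (μ R : ℕ) (x : ℝ) : 0 ≤ phi N μ R x := by
  unfold phi
  have : (0:ℝ) ≤ min N (3/|x|) := le_min hN (by positivity)
  positivity

lemma integrable_of_even_aux {f : ℝ → ℝ} (heven : ∀ x, f (-x) = f x)
    (hf : IntegrableOn f (Ioi 0)) : Integrable f := by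
  have hIic : IntegrableOn f (Iic 0) := by
    unfold IntegrableOn
    rw [show (volume : Measure ℝ) = Measure.map (fun x : ℝ => -x) volume from
      (Measure.map_neg_eq_self _).symm]
    have m : MeasurableEmbedding fun x : ℝ => -x := (Homeomorph.neg ℝ).measurableEmbedding
    rw [Measure.restrict_map m.measurable measurableSet_Iic, m.integrable_map_iff]
    simp_rw [Function.comp_def, heven, neg_preimage, neg_Iic, neg_zero]
    exact (integrableOn_Ici_iff_integrableOn_Ioi).mpr hf
  have hu := hIic.union hf
  rwa [Iic_union_Ioi, integrableOn_univ] at hu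

lemma phi_main (N : ℝ) (hN : 1 ≤ N) (μ R : ℕ) (hμR : μ + 2 ≤ R) :
    Integrable (phi N μ R) ∧ ∫ x, phi N μ R x ≤ 4 * 3^(μ+1) * N^R / N^(μ+1) := by
  have hN0 : (0:ℝ) < N := lt_of_lt_of_le one_pos hN
  set M : ℝ := 3 / N with hMdef
  have hM0 : 0 < M := by positivity
  have hmaj : ∀ x ∈ Ioi M, phi N μ R x ≤ 3^R * x ^ ((μ:ℝ) - R) := by
    intro x hx
    have hxM : M < x := hx
    have hx0 : 0 < x := lt_trans hM0 hxM
    have habs : |x| = x := abs_of_pos hx0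
    have h1 : phi N μ R x ≤ x^μ * (3/x)^R := by
      unfold phi
      rw [habs]
      refine mul_le_mul_of_nonneg_left ?_ (by positivity)
      exact pow_le_pow_left₀ (le_min (le_of_lt hN0) (by positivity)) (min_le_right _ _) R
    have h2 : x^μ * (3/x)^R = 3^R * x ^ ((μ:ℝ) - R) := by
      rw [Real.rpow_sub hx0, Real.rpow_natCast, Real.rpow_natCast, div_pow]
      field_simp
    rw [← h2]; exact h1
  have hrpow_int : IntegrableOn (fun x : ℝ => x ^ ((μ:ℝ) - R)) (Ioi M) := by
    apply integrableOn_Ioi_rpow_of_lt _ hM0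
    have : (μ:ℝ) + 2 ≤ R := by exact_mod_cast hμR
    linarith
  have htail_int : IntegrableOn (phi N μ R) (Ioi M) := by
    apply Integrable.mono' (hrpow_int.const_mul (3^R : ℝ))
    · exact (phi_meas N μ R).aestronglyMeasurable
    · filter_upwards [ae_restrict_mem measurableSet_Ioi] with x hx
      rw [Real.norm_eq_abs, abs_of_nonneg (phi_nonneg N (le_of_lt hN0) μ R x)]
      exact hmaj x hx
  have htail_val : ∫ x in Ioi M, phi N μ R x ≤ 3^(μ+1) * N^R / N^(μ+1) := by
    have h1 : ∫ x in Ioi M, phi N μ R x ≤ ∫ x in Ioi M, 3^R * x ^ ((μ:ℝ) - R) := by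
      apply setIntegral_mono_on htail_int (hrpow_int.const_mul _) measurableSet_Ioi hmaj
    have ha : ((μ:ℝ) - R) < -1 := by
      have : (μ:ℝ) + 2 ≤ R := by exact_mod_cast hμR
      linarith
    have h2 : ∫ x in Ioi M, (3:ℝ)^R * x ^ ((μ:ℝ) - R)
        = 3^R * (-M ^ (((μ:ℝ) - R) + 1) / (((μ:ℝ) - R) + 1)) := by
      rw [MeasureTheory.integral_const_mul, integral_Ioi_rpow_of_lt ha hM0]
    have h3 : (3:ℝ)^R * (-M ^ (((μ:ℝ) - R) + 1) / (((μ:ℝ) - R) + 1)) ≤ 3^(μ+1) * N^R / N^(μ+1) := by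
      have hexp : -(((μ:ℝ) - R) + 1) = ((R:ℝ) - (μ+1)) := by push_cast; ring
      have hpos : (1:ℝ) ≤ (R:ℝ) - ((μ:ℝ)+1) := by
        have : (μ:ℝ) + 2 ≤ R := by exact_mod_cast hμR
        linarith
      have hMval : M ^ (((μ:ℝ) - R) + 1) = (3:ℝ)^(μ+1) * N^R / (N^(μ+1) * 3^R) := by
        rw [show ((μ:ℝ) - R) + 1 = ((μ:ℝ)+1) - R by ring, Real.rpow_sub hM0]
        rw [show ((μ:ℝ)+1) = ((μ+1 : ℕ):ℝ) by push_cast; ring, Real.rpow_natCast, Real.rpow_natCast]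
        rw [hMdef, div_pow, div_pow]
        field_simp
        try ring
      have hD : (1:ℝ) ≤ -((((μ:ℝ) - R)) + 1) := by
        rw [hexp]; linarith [hpos]
      set A : ℝ := (3:ℝ)^(μ+1) * N^R / (N^(μ+1) * 3^R) with hA
      have hA0 : 0 < A := by positivity
      rw [hMval]
      calc (3:ℝ)^R * (-A / (((μ:ℝ) - R) + 1))
          = 3^R * (A / (-((((μ:ℝ) - R)) + 1))) := by rw [div_neg, neg_div]
        _ ≤ 3^R * A := by
            refine mul_le_mul_of_nonneg_left (div_le_self hA0.le hD) (by positivity)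
        _ = 3^(μ+1) * N^R / N^(μ+1) := by
            rw [hA]; field_simp
    calc ∫ x in Ioi M, phi N μ R x ≤ _ := h1
      _ = _ := h2
      _ ≤ _ := h3
  have hMN : (3:ℝ)^(μ+1) * N^R / N^(μ+1) = M^(μ+1) * N^R := by
    rw [hMdef, div_pow]; field_simp
  have hcb : ∀ x ∈ Ioc (0:ℝ) M, ‖phi N μ R x‖ ≤ M^μ * N^R := by
    intro x hx
    rw [Real.norm_eq_abs, abs_of_nonneg (phi_nonneg N hN0.le μ R x)]
    unfold phi
    have hxa : |x| ≤ M := by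
      rw [abs_of_pos hx.1]; exact hx.2
    refine mul_le_mul (pow_le_pow_left₀ (abs_nonneg x) hxa μ) ?_ (by positivity) (by positivity)
    exact pow_le_pow_left₀ (le_min hN0.le (by positivity)) (min_le_left _ _) R
  have hcen_int : IntegrableOn (phi N μ R) (Ioc 0 M) := by
    apply Measure.integrableOn_of_bounded (M := M^μ * N^R) measure_Ioc_lt_top.ne
      (phi_meas N μ R).aestronglyMeasurable
    filter_upwards [ae_restrict_mem measurableSet_Ioc] with x hx using hcb x hx
  have hcen_val : ∫ x in Ioc (0:ℝ) M, phi N μ R x ≤ 3^(μ+1) * N^R / N^(μ+1) := by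
    have := norm_setIntegral_le_of_norm_le_const (μ := volume) (s := Ioc (0:ℝ) M)
      (f := phi N μ R) (C := M^μ * N^R) measure_Ioc_lt_top hcb
    rw [Real.norm_eq_abs, measureReal_def] at this
    have h2 := (abs_le.mp this).2
    have hvol : (volume (Ioc (0:ℝ) M)).toReal = M := by
      rw [Real.volume_Ioc, show M - 0 = M by ring, ENNReal.toReal_ofReal hM0.le]
    rw [hvol] at h2
    rw [hMN]
    calc ∫ x in Ioc (0:ℝ) M, phi N μ R x ≤ M^μ * N^R * M := h2
      _ = M^(μ+1) * N^R := by ring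
  have hunion : Ioc (0:ℝ) M ∪ Ioi M = Ioi 0 := Ioc_union_Ioi_eq_Ioi hM0.le
  have hIoi_int : IntegrableOn (phi N μ R) (Ioi 0) := by
    rw [← hunion]; exact hcen_int.union htail_int
  have hIoi_val : ∫ x in Ioi (0:ℝ), phi N μ R x ≤ 2 * 3^(μ+1) * N^R / N^(μ+1) := by
    rw [← hunion, setIntegral_union (Ioc_disjoint_Ioi le_rfl) measurableSet_Ioi hcen_int htail_int]
    calc _ ≤ (3^(μ+1) * N^R / N^(μ+1)) + (3^(μ+1) * N^R / N^(μ+1)) := add_le_add hcen_val htail_val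
      _ = 2 * 3^(μ+1) * N^R / N^(μ+1) := by ring
  have hint : Integrable (phi N μ R) :=
    integrable_of_even_aux (fun x => by simp [phi, abs_neg]) hIoi_int
  refine ⟨hint, ?_⟩
  have heq : ∫ x, phi N μ R x = ∫ x, phi N μ R |x| := by
    congr 1; funext x; simp [phi, abs_abs]
  rw [heq, integral_comp_abs (f := phi N μ R)]
  calc 2 * ∫ x in Ioi (0:ℝ), phi N μ R x ≤ 2 * (2 * 3^(μ+1) * N^R / N^(μ+1)) := by
        linarith [hIoi_val]
    _ = 4 * 3^(μ+1) * N^R / N^(μ+1) := by ring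

/-! ### 2D change of variables -/

def Lmap : (ℝ×ℝ) →ₗ[ℝ] (ℝ×ℝ) where
  toFun t := (t.1 - t.2, t.1 + 2*t.2)
  map_add' x y := by ext <;> simp <;> ring
  map_smul' c x := by ext <;> simp <;> ring

lemma detLmap : LinearMap.det Lmap = 3 := by
  rw [← LinearMap.det_toMatrix (Module.Basis.finTwoProd ℝ), Matrix.det_fin_two]
  simp [LinearMap.toMatrix_apply, Module.Basis.finTwoProd, Lmap]
  norm_num

lemma mapLmap : Measure.map Lmap volume = ENNReal.ofReal (3:ℝ)⁻¹ • volume := by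
  have := Measure.map_linearMap_addHaar_eq_smul_addHaar (volume : Measure (ℝ×ℝ)) (f := Lmap)
    (by rw [detLmap]; norm_num)
  rw [detLmap] at this
  rwa [abs_of_nonneg (by norm_num : (0:ℝ) ≤ 3⁻¹)] at this

lemma integrable_compL (f : ℝ×ℝ → ℝ) (hf : Integrable f volume) :
    Integrable (fun t => f (Lmap t)) volume := by
  have h1 : Integrable f (Measure.map Lmap volume) := by
    rw [mapLmap]; exact hf.smul_measure (by simp)
  exact (integrable_map_measure (by rw [mapLmap]; exact hf.aestronglyMeasurable.smul_measure _)
    (by fun_prop)).mp h1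

lemma integral_compL (f : ℝ×ℝ → ℝ) (hf : AEStronglyMeasurable f volume) :
    ∫ t : ℝ×ℝ, f (Lmap t) = (3:ℝ)⁻¹ • ∫ t, f t := by
  rw [← integral_map (by fun_prop) (by rw [mapLmap]; exact hf.smul_measure _), mapLmap,
    integral_smul_measure]
  congr 1
  rw [ENNReal.toReal_ofReal (by norm_num)]

lemma hex_prod_le (φ ψ : ℝ → ℝ) (hφ : Integrable φ) (hψ : Integrable ψ)
    (hφ0 : ∀ x, 0 ≤ φ x) (hψ0 : ∀ x, 0 ≤ ψ x) :
    IntegrableOn (fun t : ℝ×ℝ => φ (t.1 - t.2) * ψ (t.1 + 2*t.2)) Hex volume ∧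
    ∫ t in Hex, φ (t.1 - t.2) * ψ (t.1 + 2*t.2) ≤ (∫ x, φ x) * (∫ x, ψ x) := by
  have hF : Integrable (fun p : ℝ×ℝ => φ p.1 * ψ p.2) volume := by
    rw [Measure.volume_eq_prod]; exact hφ.mul_prod hψ
  have heq : (fun t : ℝ×ℝ => (fun p : ℝ×ℝ => φ p.1 * ψ p.2) (Lmap t))
      = (fun t : ℝ×ℝ => φ (t.1 - t.2) * ψ (t.1 + 2*t.2)) := rfl
  have hFL : Integrable (fun t : ℝ×ℝ => φ (t.1 - t.2) * ψ (t.1 + 2*t.2)) volume := by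
    rw [← heq]; exact integrable_compL _ hF
  refine ⟨hFL.integrableOn, ?_⟩
  have h1 : ∫ t in Hex, φ (t.1 - t.2) * ψ (t.1 + 2*t.2) ≤ ∫ t : ℝ×ℝ, φ (t.1 - t.2) * ψ (t.1 + 2*t.2) := by
    apply setIntegral_le_integral hFL
    filter_upwards with t
    exact mul_nonneg (hφ0 _) (hψ0 _)
  have h2 : ∫ t : ℝ×ℝ, φ (t.1 - t.2) * ψ (t.1 + 2*t.2) = (3:ℝ)⁻¹ • ((∫ x, φ x) * (∫ x, ψ x)) := by
    rw [← heq, integral_compL _ hF.aestronglyMeasurable]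
    congr 1
    rw [Measure.volume_eq_prod, integral_prod_mul]
  have h3 : (0:ℝ) ≤ (∫ x, φ x) * (∫ x, ψ x) :=
    mul_nonneg (integral_nonneg hφ0) (integral_nonneg hψ0)
  rw [h2] at h1
  calc ∫ t in Hex, φ (t.1 - t.2) * ψ (t.1 + 2*t.2) ≤ _ := h1
    _ ≤ (∫ x, φ x) * (∫ x, ψ x) := by
        rw [smul_eq_mul]; nlinarith [h3]

/-! ### Upper bound for the weighted integral -/

lemma sqrt_le_sum (t : ℝ × ℝ) :
    Real.sqrt (t.1^2 + t.2^2) ≤ |t.1 - t.2| + |t.1 + 2*t.2| := by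
  have h1 : Real.sqrt (t.1^2 + t.2^2) ≤ |t.1| + |t.2| := by
    rw [show Real.sqrt (t.1^2 + t.2^2) = Real.sqrt ((|t.1| + |t.2|)^2 - 2*(|t.1| * |t.2|)) by
      congr 1; rw [← sq_abs t.1, ← sq_abs t.2]; ring]
    calc Real.sqrt ((|t.1| + |t.2|)^2 - 2*(|t.1| * |t.2|)) ≤ Real.sqrt ((|t.1| + |t.2|)^2) := by
          apply Real.sqrt_le_sqrt
          nlinarith [abs_nonneg t.1, abs_nonneg t.2, abs_mul_abs_self t.1, abs_mul_abs_self t.2, mul_nonneg (abs_nonneg t.1) (abs_nonneg t.2)]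
      _ = |t.1| + |t.2| := Real.sqrt_sq (by positivity)
  have h2 : |t.1| + |t.2| ≤ |t.1 - t.2| + |t.1 + 2*t.2| := by
    have e1 : t.1 = (2*(t.1 - t.2) + (t.1 + 2*t.2))/3 := by ring
    have e2 : t.2 = ((t.1 + 2*t.2) - (t.1 - t.2))/3 := by ring
    have b1 : |t.1| ≤ (2*|t.1 - t.2| + |t.1 + 2*t.2|)/3 := by
      rw [e1]
      rw [abs_div]
      rw [abs_of_pos (by norm_num : (0:ℝ) < 3)]
      have := abs_add_le (2*(t.1 - t.2)) (t.1 + 2*t.2)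
      rw [abs_mul, abs_of_pos (by norm_num : (0:ℝ) < 2)] at this
      have h3 : |2 * (t.1 - t.2) + (t.1 + 2 * t.2)| / 3 ≤ (2*|t.1 - t.2| + |t.1 + 2*t.2|)/3 := by
        linarith
      convert h3 using 3 <;> ring
    have b2 : |t.2| ≤ (|t.1 + 2*t.2| + |t.1 - t.2|)/3 := by
      rw [e2, abs_div, abs_of_pos (by norm_num : (0:ℝ) < 3)]
      have := abs_sub (t.1 + 2*t.2) (t.1 - t.2)
      have h3 : |(t.1 + 2*t.2) - (t.1 - t.2)| / 3 ≤ (|t.1 + 2*t.2| + |t.1 - t.2|)/3 := by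
        linarith
      convert h3 using 3 <;> ring
    linarith [abs_nonneg (t.1 - t.2), abs_nonneg (t.1 + 2*t.2)]
  linarith

lemma pow_add_le_two_pow (a b : ℝ) (ha : 0 ≤ a) (hb : 0 ≤ b) (ν : ℕ) :
    (a+b)^ν ≤ 2^ν * (a^ν + b^ν) := by
  have h1 : (a+b)^ν ≤ (2 * max a b)^ν := by
    apply pow_le_pow_left₀ (by positivity)
    rcases le_total a b with h | h
    · rw [max_eq_right h]; linarith
    · rw [max_eq_left h]; linarith
  have h2 : (max a b)^ν ≤ a^ν + b^ν := by
    rcases le_total a b with h | h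
    · rw [max_eq_right h]
      exact le_add_of_nonneg_left (pow_nonneg ha ν)
    · rw [max_eq_left h]
      exact le_add_of_nonneg_right (pow_nonneg hb ν)
  calc (a+b)^ν ≤ (2 * max a b)^ν := h1
    _ = 2^ν * (max a b)^ν := mul_pow 2 _ ν
    _ ≤ 2^ν * (a^ν + b^ν) := by
        exact mul_le_mul_of_nonneg_left h2 (by positivity)

lemma theta_pow_nonneg (n r : ℕ) (t : ℝ×ℝ) : 0 ≤ Theta n t ^ (2*r) := by
  rw [pow_mul]
  exact pow_nonneg (sq_nonneg _) r

lemma W_le (n r ν : ℕ) {t : ℝ×ℝ} (ht : t ∈ Hex) :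
    Real.sqrt (t.1^2 + t.2^2)^ν * Theta n t^(2*r) ≤
    2^ν * ((n:ℝ)+1)^(2*r) *
      (phi ((n:ℝ)+1) ν (2*r) (t.1 - t.2) * phi ((n:ℝ)+1) 0 (2*r) (t.1 + 2*t.2)
       + phi ((n:ℝ)+1) 0 (2*r) (t.1 - t.2) * phi ((n:ℝ)+1) ν (2*r) (t.1 + 2*t.2)) := by
  have hm1 : (0:ℝ) ≤ min ((n:ℝ)+1) (3/|t.1 - t.2|) := le_min (by positivity) (by positivity)
  have hm2 : (0:ℝ) ≤ min ((n:ℝ)+1) (3/|t.1 + 2*t.2|) := le_min (by positivity) (by positivity)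
  have hth : Theta n t ^(2*r) ≤
      (((n:ℝ)+1) * min ((n:ℝ)+1) (3/|t.1 - t.2|) * min ((n:ℝ)+1) (3/|t.1 + 2*t.2|))^(2*r) := by
    calc Theta n t ^(2*r) ≤ |Theta n t|^(2*r) := by
          rw [pow_abs]; exact le_abs_self _
      _ ≤ _ := pow_le_pow_left₀ (abs_nonneg _)
          (theta_abs_le n t (hex_d1 ht) (hex_d2 ht) (hex_d3 ht)) (2*r)
  have hsq : Real.sqrt (t.1^2 + t.2^2)^ν ≤ (|t.1 - t.2| + |t.1 + 2*t.2|)^ν :=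
    pow_le_pow_left₀ (Real.sqrt_nonneg _) (sqrt_le_sum t) ν
  calc Real.sqrt (t.1^2 + t.2^2)^ν * Theta n t^(2*r)
      ≤ (|t.1 - t.2| + |t.1 + 2*t.2|)^ν *
        (((n:ℝ)+1) * min ((n:ℝ)+1) (3/|t.1 - t.2|) * min ((n:ℝ)+1) (3/|t.1 + 2*t.2|))^(2*r) :=
        mul_le_mul hsq hth (theta_pow_nonneg n r t) (by positivity)
    _ ≤ (2^ν * (|t.1 - t.2|^ν + |t.1 + 2*t.2|^ν)) *
        (((n:ℝ)+1)^(2*r) * (min ((n:ℝ)+1) (3/|t.1 - t.2|))^(2*r) *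
         (min ((n:ℝ)+1) (3/|t.1 + 2*t.2|))^(2*r)) := by
        rw [mul_pow, mul_pow]
        exact mul_le_mul_of_nonneg_right
          (pow_add_le_two_pow _ _ (abs_nonneg _) (abs_nonneg _) ν) (by positivity)
    _ = _ := by
        simp only [phi, pow_zero, one_mul]
        ring

lemma one_le_N (n : ℕ) : (1:ℝ) ≤ (n:ℝ)+1 := by
  have : (0:ℝ) ≤ (n:ℝ) := Nat.cast_nonneg n
  linarith

lemma S_upper (n r ν : ℕ) (hr : 1 ≤ r) (hν2 : ν + 2 ≤ 2*r) :
    IntegrableOn (fun t : ℝ×ℝ => Real.sqrt (t.1^2 + t.2^2)^ν * Theta n t^(2*r)) Hex volume ∧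
    ∫ t in Hex, Real.sqrt (t.1^2 + t.2^2)^ν * Theta n t^(2*r)
      ≤ 96 * 2^ν * 3^(ν+1) * ((n:ℝ)+1)^(6*r) / ((n:ℝ)+1)^(ν+2) := by
  set N : ℝ := (n:ℝ)+1 with hNdef
  have hN : 1 ≤ N := one_le_N n
  have hN0 : (0:ℝ) < N := lt_of_lt_of_le one_pos hN
  have h02 : 0 + 2 ≤ 2*r := by omega
  obtain ⟨hiν, hvν⟩ := phi_main N hN ν (2*r) hν2
  obtain ⟨hi0, hv0⟩ := phi_main N hN 0 (2*r) h02
  obtain ⟨hit1, hvt1⟩ := hex_prod_le (phi N ν (2*r)) (phi N 0 (2*r)) hiν hi0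
    (phi_nonneg N hN0.le ν (2*r)) (phi_nonneg N hN0.le 0 (2*r))
  obtain ⟨hit2, hvt2⟩ := hex_prod_le (phi N 0 (2*r)) (phi N ν (2*r)) hi0 hiν
    (phi_nonneg N hN0.le 0 (2*r)) (phi_nonneg N hN0.le ν (2*r))
  set G : ℝ×ℝ → ℝ := fun t => 2^ν * N^(2*r) *
    (phi N ν (2*r) (t.1-t.2) * phi N 0 (2*r) (t.1+2*t.2)
     + phi N 0 (2*r) (t.1-t.2) * phi N ν (2*r) (t.1+2*t.2)) with hG
  have hGint : IntegrableOn G Hex := (hit1.add hit2).const_mul _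
  have hWmeas : Measurable (fun t : ℝ×ℝ => Real.sqrt (t.1^2 + t.2^2)^ν * Theta n t^(2*r)) := by
    have := theta_measurable n
    fun_prop
  have hWnn : ∀ t : ℝ×ℝ, 0 ≤ Real.sqrt (t.1^2 + t.2^2)^ν * Theta n t^(2*r) := fun t =>
    mul_nonneg (by positivity) (theta_pow_nonneg n r t)
  have hWle : ∀ t ∈ Hex, Real.sqrt (t.1^2 + t.2^2)^ν * Theta n t^(2*r) ≤ G t := fun t ht =>
    W_le n r ν ht
  have hWint : IntegrableOn (fun t : ℝ×ℝ => Real.sqrt (t.1^2 + t.2^2)^ν * Theta n t^(2*r)) Hex := by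
    apply Integrable.mono' hGint hWmeas.aestronglyMeasurable.restrict
    filter_upwards [ae_restrict_mem hex_measurable] with t ht
    rw [Real.norm_eq_abs, abs_of_nonneg (hWnn t)]
    exact hWle t ht
  refine ⟨hWint, ?_⟩
  have hIν0 : 0 ≤ ∫ x, phi N ν (2*r) x := integral_nonneg (phi_nonneg N hN0.le ν (2*r))
  have hI00 : 0 ≤ ∫ x, phi N 0 (2*r) x := integral_nonneg (phi_nonneg N hN0.le 0 (2*r))
  have hAν : (0:ℝ) ≤ 4 * 3^(ν+1) * N^(2*r) / N^(ν+1) := by positivity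
  have hA0 : (0:ℝ) ≤ 4 * 3^(0+1) * N^(2*r) / N^(0+1) := by positivity
  calc ∫ t in Hex, Real.sqrt (t.1^2 + t.2^2)^ν * Theta n t^(2*r)
      ≤ ∫ t in Hex, G t := setIntegral_mono_on hWint hGint hex_measurable hWle
    _ = 2^ν * N^(2*r) * ((∫ t in Hex, phi N ν (2*r) (t.1-t.2) * phi N 0 (2*r) (t.1+2*t.2))
        + ∫ t in Hex, phi N 0 (2*r) (t.1-t.2) * phi N ν (2*r) (t.1+2*t.2)) := by
        rw [hG]
        simp_rw [MeasureTheory.integral_const_mul]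
        rw [integral_add hit1 hit2]
    _ ≤ 2^ν * N^(2*r) * ((∫ x, phi N ν (2*r) x) * (∫ x, phi N 0 (2*r) x)
        + (∫ x, phi N 0 (2*r) x) * (∫ x, phi N ν (2*r) x)) := by
        exact mul_le_mul_of_nonneg_left (add_le_add hvt1 hvt2) (by positivity)
    _ ≤ 2^ν * N^(2*r) * ((4 * 3^(ν+1) * N^(2*r) / N^(ν+1)) * (4 * 3^(0+1) * N^(2*r) / N^(0+1))
        + (4 * 3^(0+1) * N^(2*r) / N^(0+1)) * (4 * 3^(ν+1) * N^(2*r) / N^(ν+1))) := by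
        refine mul_le_mul_of_nonneg_left (add_le_add ?_ ?_) (by positivity)
        · exact mul_le_mul hvν hv0 hI00 hAν
        · exact mul_le_mul hv0 hvν hIν0 hA0
    _ = 96 * 2^ν * 3^(ν+1) * N^(6*r) / N^(ν+2) := by
        have e6 : N^(6*r) = N^(2*r) * N^(2*r) * N^(2*r) := by
          rw [← pow_add, ← pow_add]; congr 1; ring
        have e2 : N^(ν+2) = N^(ν+1) * N^(0+1) := by
          rw [← pow_add]
        rw [e6, e2]
        have h1 : N^(ν+1) ≠ 0 := by positivity
        have h2 : N^(0+1) ≠ 0 := by positivity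
        field_simp
        ring

/-! ### Lower bound -/

lemma ratio_ge (k : ℕ) (x : ℝ) (hx : 0 < x) (hkx : (k:ℝ) * (π*x/3) ≤ π/2) (hk : 1 ≤ k) :
    2*(k:ℝ)/π ≤ Real.sin ((k:ℝ)*(π*x/3)) / Real.sin (π*x/3) := by
  have hπ := Real.pi_pos
  have hu0 : 0 < π*x/3 := by positivity
  have hk1 : (1:ℝ) ≤ (k:ℝ) := by exact_mod_cast hk
  have hu2 : π*x/3 ≤ π/2 := by
    calc π*x/3 = 1 * (π*x/3) := (one_mul _).symm
      _ ≤ (k:ℝ) * (π*x/3) := by exact mul_le_mul_of_nonneg_right hk1 hu0.le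
      _ ≤ π/2 := hkx
  have hsu : 0 < Real.sin (π*x/3) :=
    Real.sin_pos_of_pos_of_lt_pi hu0 (lt_of_le_of_lt hu2 (by linarith))
  rw [le_div_iff₀ hsu]
  have h1 : Real.sin (π*x/3) ≤ π*x/3 := Real.sin_le hu0.le
  have h2 : 2/π * ((k:ℝ)*(π*x/3)) ≤ Real.sin ((k:ℝ)*(π*x/3)) :=
    Real.mul_le_sin (by positivity) hkx
  calc 2*(k:ℝ)/π * Real.sin (π*x/3) ≤ 2*(k:ℝ)/π * (π*x/3) := by
        exact mul_le_mul_of_nonneg_left h1 (by positivity)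
    _ = 2/π * ((k:ℝ)*(π*x/3)) := by ring
    _ ≤ Real.sin ((k:ℝ)*(π*x/3)) := h2

lemma theta_lower (n : ℕ) (t : ℝ×ℝ)
    (ht1 : t.1 ∈ Ioo (1/(2*((n:ℝ)+1))) (5/(8*((n:ℝ)+1))))
    (ht2 : t.2 ∈ Ioo 0 (1/(8*((n:ℝ)+1)))) :
    (2*((n:ℝ)+1)/π)^3 ≤ Theta n t := by
  set N : ℝ := (n:ℝ)+1 with hNdef
  have hN : 1 ≤ N := one_le_N n
  have hN0 : (0:ℝ) < N := by linarith
  have hπ := Real.pi_pos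
  obtain ⟨ha1, ha2⟩ := ht1
  obtain ⟨hb1, hb2⟩ := ht2
  -- the three difference variables
  have hXa : 0 < t.1 - t.2 := by
    have : t.2 < 1/(8*N) := hb2
    have : 1/(8*N) < 1/(2*N) := by
      rw [div_lt_div_iff₀ (by positivity) (by positivity)]
      linarith
    linarith
  have hXa2 : N * (t.1 - t.2) ≤ 5/8 := by
    have h := mul_lt_mul_of_pos_left ha2 hN0
    rw [show N * (5/(8*N)) = 5/8 by field_simp] at h
    nlinarith [mul_pos hN0 hb1]
  have hXb : 0 < t.1 + 2*t.2 := by linarith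
  have hXb2 : N * (t.1 + 2*t.2) ≤ 7/8 := by
    have h2 := mul_lt_mul_of_pos_left hb2 hN0
    rw [show N * (1/(8*N)) = 1/8 by field_simp; try ring] at h2
    have h := mul_lt_mul_of_pos_left ha2 hN0
    rw [show N * (5/(8*N)) = 5/8 by field_simp] at h
    nlinarith
  have hXc : 0 < 2*t.1 + t.2 := by linarith
  have hXc2 : N * (2*t.1 + t.2) ≤ 11/8 := by
    have h2 := mul_lt_mul_of_pos_left hb2 hN0
    rw [show N * (1/(8*N)) = 1/8 by field_simp; try ring] at h2
    have h := mul_lt_mul_of_pos_left ha2 hN0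
    rw [show N * (5/(8*N)) = 5/8 by field_simp] at h
    nlinarith
  -- factorization
  have e1 : t.2 - t3 t = t.1 + 2*t.2 := by unfold t3; ring
  have e2 : t3 t - t.1 = -(2*t.1 + t.2) := by unfold t3; ring
  have key : Theta n t =
      (Real.sin (((n+1:ℕ):ℝ) * (π * (t.1 - t.2) / 3)) / Real.sin (π * (t.1 - t.2) / 3)) *
      (Real.sin (((n+1:ℕ):ℝ) * (π * (t.1 + 2*t.2) / 3)) / Real.sin (π * (t.1 + 2*t.2) / 3)) *
      (Real.sin (((n+1:ℕ):ℝ) * (π * (2*t.1 + t.2) / 3)) / Real.sin (π * (2*t.1 + t.2) / 3)) := by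
    unfold Theta
    rw [e1, e2]
    rw [show π * -(2*t.1 + t.2) / 3 = -(π * (2*t.1 + t.2) / 3) by ring,
      show ((n:ℝ)+1) * π * -(2*t.1 + t.2) / 3 = -(((n:ℝ)+1) * π * (2*t.1 + t.2) / 3) by ring,
      Real.sin_neg, Real.sin_neg]
    rw [div_mul_div_comm, div_mul_div_comm]
    push_cast
    ring_nf
  have hcast : ((n+1:ℕ):ℝ) = N := by push_cast; rw [hNdef]
  have harg : ∀ y : ℝ, 0 < y → N * y ≤ 3/2 → (N:ℝ) * (π*y/3) ≤ π/2 := by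
    intro y hy hNy
    calc N * (π*y/3) = (N * y) * (π/3) := by ring
      _ ≤ (3/2) * (π/3) := by exact mul_le_mul_of_nonneg_right hNy (by positivity)
      _ = π/2 := by ring
  have hk1 : 1 ≤ n+1 := by omega
  have r1 := ratio_ge (n+1) (t.1 - t.2) hXa (by rw [hcast] at *; exact harg _ hXa (by linarith)) hk1
  have r2 := ratio_ge (n+1) (t.1 + 2*t.2) hXb (by rw [hcast] at *; exact harg _ hXb (by linarith)) hk1
  have r3 := ratio_ge (n+1) (2*t.1 + t.2) hXc (by rw [hcast] at *; exact harg _ hXc (by linarith)) hk1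
  rw [hcast] at r1 r2 r3
  have hpos : (0:ℝ) < 2*N/π := by positivity
  rw [key, hcast]
  calc (2*N/π)^3 = (2*N/π) * (2*N/π) * (2*N/π) := by ring
    _ ≤ _ := by
        refine mul_le_mul (mul_le_mul r1 r2 hpos.le ?_) r3 hpos.le ?_
        · exact le_trans hpos.le r1
        · exact mul_nonneg (le_trans hpos.le r1) (le_trans hpos.le r2)

lemma I_lower (n r : ℕ) (hr : 1 ≤ r)
    (hInt : IntegrableOn (fun t : ℝ×ℝ => Theta n t^(2*r)) Hex volume) :
    ((n:ℝ)+1)^(6*r) / ((n:ℝ)+1)^2 * (1/(64*π^(6*r))) ≤ ∫ t in Hex, Theta n t^(2*r) := by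
  set N : ℝ := (n:ℝ)+1 with hNdef
  have hN : 1 ≤ N := one_le_N n
  have hN0 : (0:ℝ) < N := by linarith
  have hπ := Real.pi_pos
  set B : Set (ℝ×ℝ) := Ioo (1/(2*N)) (5/(8*N)) ×ˢ Ioo 0 (1/(8*N)) with hB
  have hBmeas : MeasurableSet B := measurableSet_Ioo.prod measurableSet_Ioo
  have hBHex : B ⊆ Hex := by
    rintro ⟨x, y⟩ ⟨⟨hx1, hx2⟩, hy1, hy2⟩
    have hxN : 1/(2*N) > 0 := by positivity
    have h58 : 5/(8*N) ≤ 5/8 := by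
      rw [div_le_div_iff₀ (by positivity) (by norm_num)]
      nlinarith
    have h18 : 1/(8*N) ≤ 1/8 := by
      rw [div_le_div_iff₀ (by positivity) (by norm_num)]
      nlinarith
    refine ⟨by simp; linarith, by simp; linarith, by simp; linarith, by simp; linarith,
      by simp; linarith, by simp; linarith⟩
  have hd : 5/(8*N) - 1/(2*N) = 1/(8*N) := by field_simp; ring
  have hvol : (volume B).toReal = 1/(8*N) * (1/(8*N)) := by
    rw [hB, Measure.volume_eq_prod, Measure.prod_prod, Real.volume_Ioo, Real.volume_Ioo, hd,
      sub_zero, ← ENNReal.ofReal_mul (by positivity), ENNReal.toReal_ofReal (by positivity)]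
  have hvollt : volume B < ⊤ := by
    rw [hB, Measure.volume_eq_prod, Measure.prod_prod, Real.volume_Ioo, Real.volume_Ioo]
    exact ENNReal.mul_lt_top ENNReal.ofReal_lt_top ENNReal.ofReal_lt_top
  have hpt : ∀ t ∈ B, N^(6*r)/π^(6*r) ≤ Theta n t^(2*r) := by
    rintro t ⟨ht1, ht2⟩
    have h1 : (2*N/π)^3 ≤ Theta n t := theta_lower n t ht1 ht2
    have h2 : (0:ℝ) < (2*N/π)^3 := by positivity
    have h3 : ((2*N/π)^3)^(2*r) ≤ Theta n t^(2*r) := pow_le_pow_left₀ h2.le h1 (2*r)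
    have h4 : ((2*N/π)^3)^(2*r) = (2*N/π)^(6*r) := by
      rw [← pow_mul]; congr 1; ring
    have h5 : N^(6*r)/π^(6*r) = (N/π)^(6*r) := (div_pow N π (6*r)).symm
    have h6 : (N/π)^(6*r) ≤ (2*N/π)^(6*r) := by
      apply pow_le_pow_left₀ (by positivity)
      rw [div_le_div_iff₀ hπ hπ]
      nlinarith
    rw [h5]
    calc (N/π)^(6*r) ≤ (2*N/π)^(6*r) := h6
      _ = ((2*N/π)^3)^(2*r) := h4.symm
      _ ≤ Theta n t^(2*r) := h3
  have hIntB : IntegrableOn (fun t : ℝ×ℝ => Theta n t^(2*r)) B := hInt.mono_set hBHex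
  have hconstint : IntegrableOn (fun _ : ℝ×ℝ => N^(6*r)/π^(6*r)) B := by
    apply (integrableOn_const_iff).mpr
    right; exact hvollt
  have step1 : ∫ t in B, (N^(6*r)/π^(6*r)) ≤ ∫ t in B, Theta n t^(2*r) :=
    setIntegral_mono_on hconstint hIntB hBmeas hpt
  have step2 : ∫ t in B, Theta n t^(2*r) ≤ ∫ t in Hex, Theta n t^(2*r) := by
    apply setIntegral_mono_set hInt
    · filter_upwards with t using theta_pow_nonneg n r t
    · exact HasSubset.Subset.eventuallyLE hBHex
  have step0 : ∫ t in B, (N^(6*r)/π^(6*r)) = (1/(8*N) * (1/(8*N))) * (N^(6*r)/π^(6*r)) := by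
    rw [setIntegral_const, measureReal_def, hvol, smul_eq_mul]
  have final : N^(6*r) / N^2 * (1/(64*π^(6*r))) = (1/(8*N) * (1/(8*N))) * (N^(6*r)/π^(6*r)) := by
    field_simp
    ring
  rw [final, ← step0]
  exact le_trans step1 step2

end Stmt12Aux

open Stmt12Aux Real Set in
/-- for `r ≥ 1` and `0 ≤ ν ≤ 2r-2`, one has
`∫_Ω Θ_n^{2r} ≍ n^{6r-2}` and `∫_Ω ‖t‖^ν K_{n,r}(t) dt ≤ c n^{-ν}`,
with constants depending only on `r` (and `ν`). -/
theorem stmt12 (r : ℕ) (hr : 1 ≤ r) (ν : ℕ) (hν : ν ≤ 2 * r - 2) :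
    (∃ c₁ c₂ : ℝ, 0 < c₁ ∧ 0 < c₂ ∧ ∀ n : ℕ, 1 ≤ n →
      c₁ * (n : ℝ) ^ (6 * r - 2) ≤ (∫ t in Hex, Theta n t ^ (2 * r)) ∧
      (∫ t in Hex, Theta n t ^ (2 * r)) ≤ c₂ * (n : ℝ) ^ (6 * r - 2)) ∧
    (∃ c : ℝ, 0 < c ∧ ∀ n : ℕ, 1 ≤ n →
      (∫ t in Hex, Real.sqrt (t.1 ^ 2 + t.2 ^ 2) ^ ν * JacksonKer n r t) ≤
        c / (n : ℝ) ^ ν) := by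
  have hν2 : ν + 2 ≤ 2*r := by omega
  have h02 : 0 + 2 ≤ 2*r := by omega
  have hπ := Real.pi_pos
  -- common facts, for each n ≥ 1
  have key : ∀ n : ℕ, 1 ≤ n →
      IntegrableOn (fun t : ℝ×ℝ => Theta n t ^ (2*r)) Hex volume ∧
      ((n:ℝ)+1)^(6*r) / ((n:ℝ)+1)^2 * (1/(64*π^(6*r))) ≤ (∫ t in Hex, Theta n t ^ (2*r)) ∧
      (∫ t in Hex, Theta n t ^ (2*r)) ≤ 288 * ((n:ℝ)+1)^(6*r) / ((n:ℝ)+1)^(0+2) := by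
    intro n hn
    obtain ⟨hint0, hup0⟩ := S_upper n r 0 hr h02
    have he : (fun t : ℝ×ℝ => Real.sqrt (t.1^2 + t.2^2)^0 * Theta n t^(2*r))
        = fun t : ℝ×ℝ => Theta n t^(2*r) := by
      funext t; simp
    rw [he] at hint0 hup0
    refine ⟨hint0, I_lower n r hr hint0, ?_⟩
    calc (∫ t in Hex, Theta n t ^ (2*r)) ≤ 96 * 2^0 * 3^(0+1) * ((n:ℝ)+1)^(6*r) / ((n:ℝ)+1)^(0+2) :=
          hup0
      _ = 288 * ((n:ℝ)+1)^(6*r) / ((n:ℝ)+1)^(0+2) := by norm_num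
  constructor
  · refine ⟨1/(64*π^(6*r)), 288 * 2^(6*r-2), by positivity, by positivity, fun n hn => ?_⟩
    obtain ⟨hint, hlow, hup⟩ := key n hn
    set N : ℝ := (n:ℝ)+1 with hNdef
    have hN : 1 ≤ N := one_le_N n
    have hN0 : (0:ℝ) < N := by linarith
    have hn1 : (1:ℝ) ≤ (n:ℝ) := by exact_mod_cast hn
    have hnN : (n:ℝ) ≤ N := by rw [hNdef]; linarith
    have hN2n : N ≤ 2*(n:ℝ) := by rw [hNdef]; linarith
    have h26 : 2 ≤ 6*r := by omega
    have epow : N^(6*r) / N^2 = N^(6*r-2) := (pow_sub₀ N (ne_of_gt hN0) h26).symm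
    constructor
    · have h1 : (n:ℝ)^(6*r-2) ≤ N^(6*r-2) := pow_le_pow_left₀ (by positivity) hnN _
      calc 1/(64*π^(6*r)) * (n:ℝ)^(6*r-2) ≤ 1/(64*π^(6*r)) * N^(6*r-2) := by
            exact mul_le_mul_of_nonneg_left h1 (by positivity)
        _ = N^(6*r) / N^2 * (1/(64*π^(6*r))) := by rw [epow]; ring
        _ ≤ _ := hlow
    · have h1 : N^(6*r-2) ≤ (2*(n:ℝ))^(6*r-2) := pow_le_pow_left₀ hN0.le hN2n _
      calc (∫ t in Hex, Theta n t ^ (2*r)) ≤ 288 * N^(6*r) / N^(0+2) := hup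
        _ = 288 * N^(6*r-2) := by rw [mul_div_assoc, show (0+2) = 2 by rfl, epow]
        _ ≤ 288 * (2*(n:ℝ))^(6*r-2) := by exact mul_le_mul_of_nonneg_left h1 (by norm_num)
        _ = 288 * 2^(6*r-2) * (n:ℝ)^(6*r-2) := by rw [mul_pow]; ring
  · refine ⟨96 * 2^ν * 3^(ν+1) * (64*π^(6*r)), by positivity, fun n hn => ?_⟩
    obtain ⟨hint, hlow, _⟩ := key n hn
    obtain ⟨hintν, hupν⟩ := S_upper n r ν hr hν2
    set N : ℝ := (n:ℝ)+1 with hNdef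
    have hN : 1 ≤ N := one_le_N n
    have hN0 : (0:ℝ) < N := by linarith
    have hn1 : (1:ℝ) ≤ (n:ℝ) := by exact_mod_cast hn
    have hnN : (n:ℝ) ≤ N := by rw [hNdef]; linarith
    set L : ℝ := N^(6*r) / N^2 * (1/(64*π^(6*r))) with hLdef
    have hL0 : 0 < L := by rw [hLdef]; positivity
    have hI0 : 0 < ∫ t in Hex, Theta n t ^ (2*r) := lt_of_lt_of_le hL0 hlow
    have hker : ∫ t in Hex, Real.sqrt (t.1 ^ 2 + t.2 ^ 2) ^ ν * JacksonKer n r t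
        = (∫ t in Hex, Real.sqrt (t.1 ^ 2 + t.2 ^ 2) ^ ν * Theta n t ^ (2*r))
          / (∫ t in Hex, Theta n t ^ (2*r)) := by
      unfold JacksonKer
      simp_rw [← mul_div_assoc]
      rw [integral_div]
    rw [hker]
    have hSnn : 0 ≤ ∫ t in Hex, Real.sqrt (t.1 ^ 2 + t.2 ^ 2) ^ ν * Theta n t ^ (2*r) :=
      setIntegral_nonneg hex_measurable fun t _ =>
        mul_nonneg (by positivity) (theta_pow_nonneg n r t)
    have step : (∫ t in Hex, Real.sqrt (t.1 ^ 2 + t.2 ^ 2) ^ ν * Theta n t ^ (2*r))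
        / (∫ t in Hex, Theta n t ^ (2*r))
        ≤ (96 * 2^ν * 3^(ν+1) * N^(6*r) / N^(ν+2)) / L :=
      div_le_div₀ (by positivity) hupν hL0 hlow
    have hNne : N ≠ 0 := ne_of_gt hN0
    have hπne : π ≠ 0 := ne_of_gt hπ
    have heq : (96 * 2^ν * 3^(ν+1) * N^(6*r) / N^(ν+2)) / L
        = 96 * 2^ν * 3^(ν+1) * (64*π^(6*r)) / N^ν := by
      rw [hLdef, show N^(ν+2) = N^ν * N^2 by rw [← pow_add]]
      field_simp
    rw [heq] at step
    have hfin : 96 * 2^ν * 3^(ν+1) * (64*π^(6*r)) / N^ν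
        ≤ 96 * 2^ν * 3^(ν+1) * (64*π^(6*r)) / (n:ℝ)^ν := by
      have hn0 : (0:ℝ) < (n:ℝ)^ν := pow_pos (by linarith) ν
      gcongr
    exact le_trans step hfin
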